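/- Let A(s) ∼ (V₁, V₂) be a P×M Laurent polynomial matrix on the unit circle, and for each s on the unit circle with ordered column rank of A(s) at least k ≥ 2, let y_k(s) be the k-th Gram–Schmidt residual of the columns of A(s), and set q̃_k(s) = Δ_{k−1}(s) y_k(s) with Δ_{k−1}(s) = Π_{i=1}^{k−1} y_i^H(s) y_i(s). Then q̃_k(s) = Σ_{i=1}^{k} (−1)^{k+i} det( A_{1..k−1}^H(s) · A_{1..k∖i}(s) ) a_i(s), where A_{1..k∖i}(s) is A_{1..k}(s) with its i-th column removed and a_i(s) is the i-th column of A(s). -/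

import Mathlib

open Matrix
open Finset
open InnerProductSpace

private instance finWellFoundedLT (n : ℕ) : WellFoundedLT (Fin n) := inferInstance

local notation "⟪" x ", " y "⟫" => @inner ℂ _ _ x y

private lemma inner_span_zero {E : Type*} [NormedAddCommGroup E] [InnerProductSpace ℂ E]
    {S : Set E} {x y : E} (hy : y ∈ Submodule.span ℂ S) (h : ∀ z ∈ S, ⟪x, z⟫ = 0) :
    ⟪x, y⟫ = 0 := by
  induction hy using Submodule.span_induction with
  | mem z hz => exact h z hz
  | zero => exact inner_zero_right x
  | add _ _ _ _ ha hb => rw [inner_add_right, ha, hb, add_zero]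
  | smul c z _ hz => rw [inner_smul_right, hz, mul_zero]

private lemma cofactor_orth {n : ℕ} (G : Matrix (Fin n) (Fin (n + 1)) ℂ) (r : Fin n) :
    ∑ i : Fin (n + 1), (-1 : ℂ) ^ (n + (i : ℕ)) * G r i *
      (G.submatrix id i.succAbove).det = 0 := by
  classical
  set H : Matrix (Fin (n + 1)) (Fin (n + 1)) ℂ :=
    Matrix.of (fun a j => if h : (a : ℕ) < n then G ⟨a, h⟩ j else G r j) with hH
  have hrow : ∀ (a : Fin n) (j : Fin (n+1)), H a.castSucc j = G a j := by
    intro a j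
    show (if h : ((a.castSucc : Fin (n+1)) : ℕ) < n then G ⟨a.castSucc, h⟩ j else G r j) = G a j
    rw [dif_pos (by simp)]
    congr 1
  have hlast : ∀ j, H (Fin.last n) j = G r j := by
    intro j
    show (if h : ((Fin.last n : Fin (n+1)) : ℕ) < n then G ⟨_, h⟩ j else G r j) = G r j
    rw [dif_neg (by simp)]
  have hdet : H.det = 0 := by
    apply Matrix.det_zero_of_row_eq (i := (r : Fin n).castSucc) (j := Fin.last n)
      (Fin.castSucc_lt_last r).ne
    funext j
    rw [hrow, hlast]
  have hexp := Matrix.det_succ_row H (Fin.last n)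
  rw [hdet] at hexp
  have heq : ∀ j : Fin (n + 1),
      (-1 : ℂ) ^ ((Fin.last n : ℕ) + (j : ℕ)) * H (Fin.last n) j *
        (H.submatrix (Fin.last n).succAbove j.succAbove).det
      = (-1 : ℂ) ^ (n + (j : ℕ)) * G r j * (G.submatrix id j.succAbove).det := by
    intro j
    have h2 : H.submatrix (Fin.last n).succAbove j.succAbove =
        G.submatrix id j.succAbove := by
      ext a c
      simp only [Matrix.submatrix_apply, Fin.succAbove_last, id_eq]
      exact hrow a _
    rw [hlast, h2, Fin.val_last]
  rw [Finset.sum_congr rfl (fun j _ => heq j)] at hexp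
  exact hexp.symm

private lemma E_sum_apply {P : Type*} [Fintype P] {ι : Type*} (s : Finset ι)
    (f : ι → EuclideanSpace ℂ P) (p : P) :
    (∑ i ∈ s, f i) p = ∑ i ∈ s, f i p :=
  map_sum (PiLp.projₗ (𝕜 := ℂ) (β := fun _ : P => ℂ) 2 p) f s

private theorem gs_cofactor_aux {P n : ℕ}
    (b : Fin (n + 1) → EuclideanSpace ℂ (Fin P))
    (hb : LinearIndependent ℂ b) :
    (∏ i : Fin n, ⟪gramSchmidt ℂ b i.castSucc, gramSchmidt ℂ b i.castSucc⟫) •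
        gramSchmidt ℂ b (Fin.last n) =
    ∑ i : Fin (n + 1),
      ((-1 : ℂ) ^ ((n + 1) + (i : ℕ) + 1) *
        ((Matrix.of fun (p : Fin P) (j : Fin n) => b j.castSucc p)ᴴ *
          Matrix.of fun (p : Fin P) (j : Fin n) => b (i.succAbove j) p).det) • b i := by
  classical
  set g : Fin (n+1) → EuclideanSpace ℂ (Fin P) := gramSchmidt ℂ b with hg
  have horth : ∀ {i j : Fin (n+1)}, i ≠ j → ⟪g i, g j⟫ = 0 :=
    fun {i j} h => gramSchmidt_orthogonal ℂ b h
  have hgg : ∀ i, ⟪g i, g i⟫ ≠ 0 := fun i => inner_self_ne_zero.mpr (gramSchmidt_ne_zero i hb)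
  have hgb0 : ∀ {i j : Fin (n+1)}, j < i → ⟪g i, b j⟫ = 0 := by
    intro i j hij
    have hmem : b j ∈ Submodule.span ℂ (g '' Set.Iic j) := by
      rw [hg, span_gramSchmidt_Iic]
      exact Submodule.subset_span ⟨j, Set.mem_Iic.2 le_rfl, rfl⟩
    refine inner_span_zero hmem ?_
    rintro z ⟨l, hl, rfl⟩
    exact horth (lt_of_le_of_lt hl hij).ne'
  have hgbd : ∀ i, ⟪g i, b i⟫ = ⟪g i, g i⟫ := by
    intro i
    calc ⟪g i, b i⟫ = ⟪g i, g i + ∑ l ∈ Finset.Iio i,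
        (((ℂ ∙ g l).starProjection (b i)) : EuclideanSpace ℂ (Fin P))⟫ := by
          rw [← gramSchmidt_def' ℂ b i]
    _ = ⟪g i, g i⟫ := by
        rw [inner_add_right, inner_sum]
        rw [Finset.sum_eq_zero, add_zero]
        intro l hl
        rw [Submodule.starProjection_singleton, inner_smul_right,
          horth (Finset.mem_Iio.mp hl).ne', mul_zero]
  set L : Matrix (Fin (n+1)) (Fin (n+1)) ℂ :=
    Matrix.of (fun i j => ⟪g i, b j⟫ / ⟪g i, g i⟫) with hL
  have hLdiag : ∀ i, L i i = 1 := fun i => by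
    show ⟪g i, b i⟫ / ⟪g i, g i⟫ = 1
    rw [hgbd, div_self (hgg i)]
  have hLlow : ∀ {i j : Fin (n+1)}, j < i → L i j = 0 := fun {i j} h => by
    show ⟪g i, b j⟫ / ⟪g i, g i⟫ = 0
    rw [hgb0 h, zero_div]
  have hBcol : ∀ j, b j = ∑ i : Fin (n+1), L i j • g i := by
    intro j
    have h3 : ∑ i : Fin (n+1), L i j • g i = ∑ i ∈ Finset.Iic j, L i j • g i := by
      refine (Finset.sum_subset (Finset.subset_univ _) ?_).symm
      intro i _ hi
      rw [hLlow (by simpa using hi), zero_smul]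
    rw [h3, ← Finset.Iio_insert, Finset.sum_insert (by simp), hLdiag, one_smul]
    rw [gramSchmidt_def'' ℂ b j]
    congr 1
    refine Finset.sum_congr rfl fun i _ => ?_
    congr 1
    rw [← inner_self_eq_norm_sq_to_K]
    rfl
  have hBcol' : ∀ (j : Fin (n+1)) (p : Fin P), b j p = ∑ i : Fin (n+1), L i j * g i p := by
    intro j p
    have h := congrArg (fun x : EuclideanSpace ℂ (Fin P) => x p) (hBcol j)
    simp only at h
    rw [h, E_sum_apply]
    exact Finset.sum_congr rfl fun i _ => rfl
  -- matrices
  set C : Matrix (Fin P) (Fin n) ℂ := Matrix.of (fun p (j : Fin n) => b j.castSucc p) with hC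
  set Bm : Matrix (Fin P) (Fin (n+1)) ℂ := Matrix.of (fun p i => b i p) with hBm
  set G : Matrix (Fin n) (Fin (n+1)) ℂ := Cᴴ * Bm with hGdef
  have hGentry : ∀ (r : Fin n) (i : Fin (n+1)), G r i = ⟪b r.castSucc, b i⟫ := by
    intro r i
    rw [hGdef, Matrix.mul_apply]
    simp [hC, hBm, PiLp.inner_apply, Matrix.conjTranspose_apply, mul_comm]
  have hCD : ∀ i : Fin (n+1),
      Cᴴ * Matrix.of (fun (p : Fin P) (j : Fin n) => b (i.succAbove j) p) =
        G.submatrix id i.succAbove := by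
    intro i
    ext a c
    rw [Matrix.submatrix_apply, hGdef]
    simp only [Matrix.mul_apply]
    rfl
  set w : Fin (n+1) → ℂ := fun i => (-1:ℂ)^((n+1) + (i:ℕ) + 1) *
      (Cᴴ * Matrix.of (fun (p : Fin P) (j : Fin n) => b (i.succAbove j) p)).det with hw
  have hworth : ∀ r : Fin n, ∑ i : Fin (n+1), w i * G r i = 0 := by
    intro r
    have h0 := cofactor_orth G r
    rw [← h0]
    refine Finset.sum_congr rfl fun i _ => ?_
    show (-1:ℂ)^((n+1) + (i:ℕ) + 1) *
      (Cᴴ * Matrix.of (fun (p : Fin P) (j : Fin n) => b (i.succAbove j) p)).det * G r i = _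
    rw [hCD]
    have hsign : (-1:ℂ)^((n+1) + (i:ℕ) + 1) = (-1:ℂ)^(n + (i:ℕ)) := by
      rw [show (n+1) + (i:ℕ) + 1 = (n + (i:ℕ)) + 2 from by omega, pow_add]
      norm_num
    rw [hsign]; ring
  have hq_orth : ∀ r : Fin n, ⟪b r.castSucc, ∑ i : Fin (n+1), w i • b i⟫ = 0 := by
    intro r
    rw [inner_sum]
    simp_rw [inner_smul_right]
    rw [← hworth r]
    exact Finset.sum_congr rfl fun i _ => by rw [hGentry]
  set Δ : ℂ := ∏ i : Fin n, ⟪g i.castSucc, g i.castSucc⟫ with hΔ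
  -- factor C
  have hCfact : C = (Matrix.of fun p (i : Fin n) => g i.castSucc p) *
      (Matrix.of fun (i j : Fin n) => L i.castSucc j.castSucc) := by
    ext p j
    rw [Matrix.mul_apply]
    show b j.castSucc p = ∑ i : Fin n, g i.castSucc p * L i.castSucc j.castSucc
    rw [hBcol' j.castSucc p, Fin.sum_univ_castSucc,
      hLlow (Fin.castSucc_lt_last j), zero_mul, add_zero]
    exact Finset.sum_congr rfl fun i _ => mul_comm _ _
  have hYY : (Matrix.of fun p (i : Fin n) => g i.castSucc p)ᴴ *
      (Matrix.of fun p (i : Fin n) => g i.castSucc p) =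
      Matrix.diagonal (fun i : Fin n => ⟪g i.castSucc, g i.castSucc⟫) := by
    ext i j
    rw [Matrix.mul_apply]
    by_cases h : i = j
    · subst h
      rw [Matrix.diagonal_apply_eq, EuclideanSpace.inner_eq_star_dotProduct, dotProduct_comm]
      rfl
    · rw [Matrix.diagonal_apply_ne _ h]
      have : ⟪g i.castSucc, g j.castSucc⟫ = 0 :=
        horth (fun hc => h (Fin.castSucc_injective n hc))
      rw [← this]
      simp [PiLp.inner_apply, Matrix.conjTranspose_apply, mul_comm]
  have hLtri : (Matrix.of fun (i j : Fin n) => L i.castSucc j.castSucc).det = 1 := by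
    rw [Matrix.det_of_upperTriangular]
    · exact Finset.prod_eq_one fun i _ => hLdiag i.castSucc
    · intro i j hij
      exact hLlow (by exact_mod_cast Fin.castSucc_lt_castSucc_iff.mpr hij)
  have hdetCC : (Cᴴ * C).det = Δ := by
    rw [hCfact, Matrix.conjTranspose_mul, Matrix.mul_assoc, ← Matrix.mul_assoc
      (Matrix.of fun p (i : Fin n) => g i.castSucc p)ᴴ, hYY]
    rw [Matrix.det_mul, Matrix.det_mul, Matrix.det_conjTranspose, hLtri,
      Matrix.det_diagonal]
    simp [hΔ]
  have hDlast : Matrix.of (fun (p : Fin P) (j : Fin n) => b ((Fin.last n).succAbove j) p) = C := by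
    ext p j
    rw [Fin.succAbove_last]
  have hwlast : w (Fin.last n) = Δ := by
    show (-1:ℂ)^((n+1) + ((Fin.last n : Fin (n+1)) : ℕ) + 1) *
      (Cᴴ * Matrix.of (fun (p : Fin P) (j : Fin n) =>
        b ((Fin.last n).succAbove j) p)).det = Δ
    rw [hDlast, hdetCC, Fin.val_last,
      show (n+1) + n + 1 = 2 * (n+1) from by omega, pow_mul]
    norm_num
  have hp_orth : ∀ r : Fin n, ⟪b r.castSucc, Δ • g (Fin.last n)⟫ = 0 := by
    intro r
    rw [inner_smul_right]
    have : ⟪g (Fin.last n), b r.castSucc⟫ = 0 := hgb0 (Fin.castSucc_lt_last r)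
    rw [← inner_conj_symm, this, map_zero, mul_zero]
  -- span membership
  set T : Submodule ℂ (EuclideanSpace ℂ (Fin P)) :=
    Submodule.span ℂ (Set.range fun i : Fin n => b i.castSucc) with hT
  have hbT : ∀ i : Fin n, b i.castSucc ∈ T := fun i => Submodule.subset_span ⟨i, rfl⟩
  have hgT : ∀ i : Fin (n+1), i < Fin.last n → g i ∈ T := by
    intro i hi
    have hmem : g i ∈ Submodule.span ℂ (b '' Set.Iic i) := gramSchmidt_mem_span ℂ b le_rfl
    refine Submodule.span_le.mpr ?_ hmem
    rintro z ⟨l, hl, rfl⟩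
    have hln : (l : ℕ) < n := by
      have h1 : (l : ℕ) ≤ (i : ℕ) := hl
      have h2 : (i : ℕ) < n := hi
      omega
    have : l = (⟨(l : ℕ), hln⟩ : Fin n).castSucc := Fin.ext rfl
    rw [this]
    exact hbT _
  have hspan : Δ • g (Fin.last n) - (∑ i : Fin (n+1), w i • b i) ∈ T := by
    have hdef : g (Fin.last n) = b (Fin.last n) - ∑ i ∈ Finset.Iio (Fin.last n),
        (((ℂ ∙ g i).starProjection (b (Fin.last n))) : EuclideanSpace ℂ (Fin P)) :=
      gramSchmidt_def ℂ b (Fin.last n)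
    have hS : (∑ i ∈ Finset.Iio (Fin.last n),
        (((ℂ ∙ g i).starProjection (b (Fin.last n))) : EuclideanSpace ℂ (Fin P))) ∈ T := by
      refine Submodule.sum_mem _ fun i hi => ?_
      rw [Submodule.starProjection_singleton]
      exact T.smul_mem _ (hgT i (Finset.mem_Iio.mp hi))
    have hsplit : ∑ i : Fin (n+1), w i • b i =
        (∑ i : Fin n, w i.castSucc • b i.castSucc) + Δ • b (Fin.last n) := by
      rw [Fin.sum_univ_castSucc, hwlast]
    rw [hdef, hsplit, smul_sub]
    have hrw : Δ • b (Fin.last n) - Δ • (∑ i ∈ Finset.Iio (Fin.last n),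
        (((ℂ ∙ g i).starProjection (b (Fin.last n))) : EuclideanSpace ℂ (Fin P))) -
        ((∑ i : Fin n, w i.castSucc • b i.castSucc) + Δ • b (Fin.last n)) =
        -(Δ • (∑ i ∈ Finset.Iio (Fin.last n),
          (((ℂ ∙ g i).starProjection (b (Fin.last n))) : EuclideanSpace ℂ (Fin P)))) -
        (∑ i : Fin n, w i.castSucc • b i.castSucc) := by
      abel
    rw [hrw]
    exact T.sub_mem (T.neg_mem (T.smul_mem _ hS))
      (Submodule.sum_mem _ fun i _ => T.smul_mem _ (hbT i))
  -- conclude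
  obtain ⟨c, hc⟩ := (Submodule.mem_span_range_iff_exists_fun ℂ).mp hspan
  have hu_orth : ∀ r : Fin n,
      ⟪b r.castSucc, Δ • g (Fin.last n) - (∑ i : Fin (n+1), w i • b i)⟫ = 0 := fun r => by
    rw [inner_sub_right, hp_orth, hq_orth, sub_zero]
  have hmv : (Cᴴ * C) *ᵥ c = 0 := by
    funext r
    have h1 : ⟪b r.castSucc, ∑ i : Fin n, c i • b i.castSucc⟫ = 0 := by
      rw [hc]; exact hu_orth r
    rw [inner_sum] at h1
    simp_rw [inner_smul_right] at h1
    show ∑ i : Fin n, (Cᴴ * C) r i * c i = 0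
    rw [← h1]
    refine Finset.sum_congr rfl fun i _ => ?_
    rw [mul_comm]
    congr 1
    rw [EuclideanSpace.inner_eq_star_dotProduct, dotProduct_comm]
    rfl
  have hdetC : (Cᴴ * C).det ≠ 0 := by
    rw [hdetCC, hΔ]
    exact Finset.prod_ne_zero_iff.mpr fun i _ => hgg _
  have hc0 : c = 0 := Matrix.eq_zero_of_mulVec_eq_zero hdetC hmv
  have hu0 : Δ • g (Fin.last n) - (∑ i : Fin (n+1), w i • b i) = 0 := by
    rw [← hc, hc0]
    simp
  exact sub_eq_zero.mp hu0


/-- `f` is a Laurent polynomial of type `(W₁, W₂)` on the unit circle: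
`f s = ∑_{v=-W₁}^{W₂} c v * s^(-v)` for all `s` with `|s| = 1`. -/
def IsLP (W₁ W₂ : ℕ) (f : ℂ → ℂ) : Prop :=
  ∃ c : ℤ → ℂ, ∀ s : ℂ, ‖s‖ = 1 →
    f s = ∑ v ∈ Finset.Icc (-(W₁ : ℤ)) (W₂ : ℤ), c v * s ^ (-v)

/-- The `k`-th scaled Gram–Schmidt vector `q̃_k(s) = Δ_{k-1}(s) y_k(s)` equals the
alternating cofactor combination
`∑_{i=1}^k (-1)^{k+i} det(A_{1..k-1}ᴴ(s) A_{1..k∖i}(s)) a_i(s)`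
(everything stated in 1-based numbering of the paper; internally the `i`-th column
is the column of index `i-1`). -/
theorem scaled_gram_schmidt_cofactor_formula {P M : ℕ} (V₁ V₂ : ℕ)
    (A : ℂ → Matrix (Fin P) (Fin M) ℂ)
    (hA : ∀ (p : Fin P) (m : Fin M), IsLP V₁ V₂ (fun s => A s p m))
    (k : ℕ) (hk2 : 2 ≤ k) (hkM : k ≤ M)
    (y : ℂ → Fin M → (Fin P → ℂ))
    (s : ℂ) (hs : ‖s‖ = 1)
    -- the ordered column rank of `A(s)` is at least `k`: the first `k` columns
    -- are linearly independent
    (hrank : (Matrix.of fun (p : Fin P) (j : Fin k) =>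
        A s p (Fin.castLE hkM j)).rank = k)
    -- Gram–Schmidt recursion for the first `k` columns of `A(s)`
    (hGS : ∀ j : Fin M, (j : ℕ) < k → y s j = (fun p => A s p j) -
      ∑ i ∈ Finset.univ.filter (fun i : Fin M => i < j),
        ((star (y s i) ⬝ᵥ (fun p => A s p j)) / (star (y s i) ⬝ᵥ y s i)) • y s i) :
    (∏ i ∈ Finset.univ.filter (fun i : Fin M => (i : ℕ) < k - 1),
        (star (y s i) ⬝ᵥ y s i)) • y s ⟨k - 1, by omega⟩ =
    ∑ i : Fin k,
      ((-1 : ℂ) ^ (k + (i : ℕ) + 1) *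
        ((Matrix.of fun (p : Fin P) (j : Fin (k - 1)) =>
            A s p ⟨j, by have := j.isLt; omega⟩)ᴴ *
          Matrix.of fun (p : Fin P) (j : Fin (k - 1)) =>
            A s p ⟨if (j : ℕ) < (i : ℕ) then (j : ℕ) else (j : ℕ) + 1,
              by have := j.isLt; have := i.isLt; split <;> omega⟩).det) •
        (fun p : Fin P => A s p (Fin.castLE hkM i)) := by

  classical
  obtain ⟨n, rfl⟩ : ∃ n, k = n + 1 := ⟨k - 1, by omega⟩
  set b : Fin (n+1) → EuclideanSpace ℂ (Fin P) :=
    fun j => WithLp.toLp 2 (fun p => A s p (Fin.castLE hkM j)) with hbdef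
  -- linear independence of the first k columns
  have hb : LinearIndependent ℂ b := by
    have h1 : LinearIndependent ℂ
        (fun j : Fin (n+1) => (fun p => A s p (Fin.castLE hkM j) : Fin P → ℂ)) := by
      rw [linearIndependent_iff_card_eq_finrank_span, Fintype.card_fin]
      have h2 := hrank
      rw [Matrix.rank_eq_finrank_span_cols] at h2
      exact h2.symm
    exact h1.map' (WithLp.linearEquiv 2 ℂ (Fin P → ℂ)).symm.toLinearMap (LinearEquiv.ker _)
  -- identify y with the Gram-Schmidt vectors
  have key : ∀ (m : ℕ) (hm : m < n + 1),
      y s (Fin.castLE hkM ⟨m, hm⟩) = gramSchmidt ℂ b ⟨m, hm⟩ := by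
    intro m
    induction m using Nat.strong_induction_on with
    | _ m ih =>
      intro hm
      have hrec := hGS (Fin.castLE hkM ⟨m, hm⟩) (by simpa using hm)
      have hmap : Finset.univ.filter (fun i : Fin M => i < Fin.castLE hkM ⟨m, hm⟩) =
          (Finset.Iio (⟨m, hm⟩ : Fin (n+1))).map (Fin.castLEEmb hkM) := by
        ext x
        simp only [Finset.mem_filter, Finset.mem_univ, true_and, Finset.mem_map,
          Finset.mem_Iio, Fin.castLEEmb, Function.Embedding.coeFn_mk, Fin.lt_def]
        constructor
        · intro hx
          have hx' : (x : ℕ) < n + 1 := by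
            have : (x : ℕ) < m := by simpa using hx
            omega
          exact ⟨⟨(x : ℕ), hx'⟩, by simpa using hx, by apply Fin.ext; rfl⟩
        · rintro ⟨a, ha, rfl⟩
          simpa using ha
      have hsum : ∑ i ∈ Finset.univ.filter (fun i : Fin M => i < Fin.castLE hkM ⟨m, hm⟩),
          ((star (y s i) ⬝ᵥ (fun p => A s p (Fin.castLE hkM ⟨m, hm⟩))) /
            (star (y s i) ⬝ᵥ y s i)) • y s i
          = WithLp.ofLp (∑ i ∈ Finset.Iio (⟨m, hm⟩ : Fin (n+1)),
            (((ℂ ∙ gramSchmidt ℂ b i).starProjection (b ⟨m, hm⟩)) :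
              EuclideanSpace ℂ (Fin P))) := by
        rw [hmap, Finset.sum_map, WithLp.ofLp_sum]
        refine Finset.sum_congr rfl fun i hi => ?_
        have hiv : (i : ℕ) < m := by simpa [Fin.lt_def] using hi
        have hyi : y s (Fin.castLEEmb hkM i) = gramSchmidt ℂ b i := by
          have := ih (i : ℕ) hiv i.isLt
          simpa using this
        rw [hyi, Submodule.starProjection_singleton, RCLike.ofReal_pow,
          ← inner_self_eq_norm_sq_to_K]
        simp only [WithLp.ofLp_smul, EuclideanSpace.inner_eq_star_dotProduct, dotProduct_comm (star _)]
        rfl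
      rw [hrec, hsum]
      rw [gramSchmidt_def ℂ b ⟨m, hm⟩]
      rfl
  -- rewrite the product
  have hemb : Function.Injective (fun i : Fin n => Fin.castLE hkM i.castSucc) := by
    intro a c h
    have h' : ((a : ℕ)) = (c : ℕ) := by
      have := congrArg Fin.val h
      simpa using this
    exact Fin.ext h'
  have hset : Finset.univ.filter (fun i : Fin M => (i : ℕ) < n + 1 - 1) =
      Finset.univ.map ⟨fun i : Fin n => Fin.castLE hkM i.castSucc, hemb⟩ := by
    ext x
    simp only [Finset.mem_filter, Finset.mem_univ, true_and, Finset.mem_map,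
      Function.Embedding.coeFn_mk]
    constructor
    · intro hx
      have hx' : (x : ℕ) < n := by omega
      refine ⟨⟨(x : ℕ), hx'⟩, ?_⟩
      apply Fin.ext
      rfl
    · rintro ⟨a, rfl⟩
      have := a.isLt
      show ((Fin.castLE hkM a.castSucc : Fin M) : ℕ) < n + 1 - 1
      simp only [Fin.coe_castLE, Fin.coe_castSucc]
      omega
  have hprod : (∏ i ∈ Finset.univ.filter (fun i : Fin M => (i : ℕ) < n + 1 - 1),
      (star (y s i) ⬝ᵥ y s i)) =
      ∏ i : Fin n, ⟪gramSchmidt ℂ b i.castSucc, gramSchmidt ℂ b i.castSucc⟫ := by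
    rw [hset, Finset.prod_map]
    refine Finset.prod_congr rfl fun i _ => ?_
    have hyi : y s (Fin.castLE hkM i.castSucc) = gramSchmidt ℂ b i.castSucc := by
      have := key (i : ℕ) (by omega)
      exact this
    show star (y s (Fin.castLE hkM i.castSucc)) ⬝ᵥ y s (Fin.castLE hkM i.castSucc) = _
    rw [hyi]
    rw [EuclideanSpace.inner_eq_star_dotProduct, dotProduct_comm]
  have hylast : y s (⟨n + 1 - 1, by omega⟩ : Fin M) = gramSchmidt ℂ b (Fin.last n) :=
    key n (by omega)
  have hval : ∀ (i : Fin (n+1)) (j : Fin n),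
      ((i.succAbove j : Fin (n+1)) : ℕ) =
        if (j : ℕ) < (i : ℕ) then (j : ℕ) else (j : ℕ) + 1 := by
    intro i j
    by_cases h : (j : ℕ) < (i : ℕ)
    · rw [if_pos h, Fin.succAbove, if_pos (by simpa [Fin.lt_def] using h)]
      rfl
    · rw [if_neg h, Fin.succAbove, if_neg (by simpa [Fin.lt_def] using h)]
      rfl
  rw [hprod, hylast]
  rw [← WithLp.ofLp_smul, gs_cofactor_aux b hb, WithLp.ofLp_sum]
  refine Finset.sum_congr rfl fun i _ => ?_
  have hmat : (Matrix.of fun (p : Fin P) (j : Fin n) => b (i.succAbove j) p) =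
      (Matrix.of fun (p : Fin P) (j : Fin (n + 1 - 1)) =>
        A s p ⟨if (j : ℕ) < (i : ℕ) then (j : ℕ) else (j : ℕ) + 1,
          by have := j.isLt; have := i.isLt; split <;> omega⟩) := by
    ext p j
    show A s p (Fin.castLE hkM (i.succAbove j)) = _
    congr 1
    apply Fin.ext
    simpa using hval i j
  rw [hmat]
  rfl
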